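/- For γ > 0 and b > 0, define the M-type penalty p_M : ℝ → ℝ by p_M(z) = −γ(z² − 2b|z|) if |z| < 2b, and p_M(z) = 0 if |z| ≥ 2b. Then for every dimension d ≥ 1, every v ∈ ℝ^d, and every ς > γ, the function u ↦ ς‖u − v‖₂² + p_M(‖u‖₂) is strongly convex on ℝ^d with modulus 2(ς − γ), i.e., u ↦ ς‖u − v‖₂² + p_M(‖u‖₂) − (ς − γ)‖u‖₂² is convex on ℝ^d. -/

import Mathlib

lemma norm_sq_convexOn_aux {d : ℕ} :
    ConvexOn ℝ Set.univ (fun u : EuclideanSpace ℝ (Fin d) => ‖u‖ ^ 2) := by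
  refine ⟨convex_univ, fun x _ y _ a b ha hb hab => ?_⟩
  have h1 : ‖a • x + b • y‖ ≤ a * ‖x‖ + b * ‖y‖ := by
    calc ‖a • x + b • y‖ ≤ ‖a • x‖ + ‖b • y‖ := norm_add_le _ _
      _ = a * ‖x‖ + b * ‖y‖ := by
          rw [norm_smul, norm_smul]; simp [abs_of_nonneg ha, abs_of_nonneg hb]
  have h2 : ‖a • x + b • y‖ ^ 2 ≤ (a * ‖x‖ + b * ‖y‖) ^ 2 :=
    pow_le_pow_left₀ (norm_nonneg _) h1 2
  simp only [smul_eq_mul]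
  nlinarith [norm_nonneg x, norm_nonneg y, sq_nonneg (‖x‖ - ‖y‖), mul_nonneg ha hb]

/-- the M-type penalty composed with the norm, plus `ς‖u−v‖²` with `ς > γ`,
is strongly convex with modulus `2(ς − γ)`. -/
theorem mtype_prox_strongly_convex (γ b : ℝ) (hγ : 0 < γ) (hb : 0 < b)
    (pM : ℝ → ℝ)
    (hp : pM = fun z => if |z| < 2 * b then -γ * (z ^ 2 - 2 * b * |z|) else 0)
    (d : ℕ) (hd : 1 ≤ d) (v : EuclideanSpace ℝ (Fin d)) (ς : ℝ) (hς : γ < ς) :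
    ConvexOn ℝ Set.univ (fun u : EuclideanSpace ℝ (Fin d) =>
      ς * ‖u - v‖ ^ 2 + pM ‖u‖ - (ς - γ) * ‖u‖ ^ 2) := by
  have key : (fun u : EuclideanSpace ℝ (Fin d) =>
      ς * ‖u - v‖ ^ 2 + pM ‖u‖ - (ς - γ) * ‖u‖ ^ 2)
      = fun u => max (2 * γ * b * ‖u‖) (γ * ‖u‖ ^ 2)
          + ((-(2 * ς)) • (innerSL ℝ v) u + ς * ‖v‖ ^ 2) := by
    funext u
    have hexp : ‖u - v‖ ^ 2 = ‖u‖ ^ 2 - 2 * (inner ℝ u v : ℝ) + ‖v‖ ^ 2 :=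
      norm_sub_sq_real u v
    have habs : |‖u‖| = ‖u‖ := abs_of_nonneg (norm_nonneg u)
    have hsym : (inner ℝ v u : ℝ) = (inner ℝ u v : ℝ) := real_inner_comm u v
    simp only [hp, habs, innerSL_apply_apply, smul_eq_mul, hsym]
    by_cases h : ‖u‖ < 2 * b
    · rw [if_pos h, max_eq_left, hexp]; · ring
      have : γ * ‖u‖ ^ 2 ≤ γ * (2 * b * ‖u‖) := by
        apply mul_le_mul_of_nonneg_left _ hγ.le
        rw [pow_two]
        exact mul_le_mul_of_nonneg_right h.le (norm_nonneg u)
      linarith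
    · rw [if_neg h, max_eq_right, hexp]; · ring
      push_neg at h
      have : γ * (2 * b * ‖u‖) ≤ γ * ‖u‖ ^ 2 := by
        apply mul_le_mul_of_nonneg_left _ hγ.le
        rw [pow_two]
        exact mul_le_mul_of_nonneg_right h (norm_nonneg u)
      linarith
  rw [key]
  apply ConvexOn.add
  · apply ConvexOn.sup
    · exact convexOn_univ_norm.smul (by positivity)
    · exact norm_sq_convexOn_aux.smul hγ.le
  · apply ConvexOn.add
    · exact ((-(2 * ς)) • (innerSL ℝ v)).toLinearMap.convexOn convex_univ
    · exact convexOn_const _ convex_univ
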